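/- arXiv:2201.11324 — 2 statements merged into one kernel-verified Lean document; each statement's English description precedes it below -/
import Mathlib

section
/- Let f : ℝ^d → ℝ be three times continuously differentiable on an open set containing the point x. Define the vector A(h) ∈ ℝ^d by A(h) = 2^{−d} Σ_{Δ ∈ {−1,1}^d} ((f(x+hΔ) − f(x−hΔ))/(2h)) Δ, the uniform average over all sign vectors Δ of the simultaneous-perturbation difference quotient vector. Then there exist constants C > 0 and h₀ > 0 such that for every 0 < h < h₀, ‖A(h) − ∇f(x)‖ ≤ C h², where ‖·‖ is the Euclidean norm. -/
open Finset

noncomputable def signVec (d : ℕ) (s : Fin d → Bool) : EuclideanSpace ℝ (Fin d) :=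
  WithLp.toLp 2 (fun k => if s k then 1 else -1)

lemma signVec_mul_sum (d : ℕ) (j k : Fin d) :
    ∑ s : Fin d → Bool, signVec d s j * signVec d s k = if j = k then (2^d : ℝ) else 0 := by
  rcases eq_or_ne j k with rfl | hjk
  · rw [if_pos rfl]
    rw [Finset.sum_congr rfl (fun s _ => (by simp only [signVec, PiLp.toLp_apply]; cases s j <;> norm_num :
      signVec d s j * signVec d s j = 1))]
    simp [Finset.card_univ]
  · rw [if_neg hjk]
    set F : (Fin d → Bool) → ℝ := fun s => signVec d s j * signVec d s k with hF
    have hinv : Function.Involutive (fun s : Fin d → Bool => Function.update s j (!s j)) := by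
      intro s
      funext i
      rcases eq_or_ne i j with rfl | hij
      · simp
      · simp [Function.update_of_ne hij]
    have hneg : ∀ s : Fin d → Bool, F (Function.update s j (!s j)) = -F s := by
      intro s
      have h1 : signVec d (Function.update s j (!s j)) j = -signVec d s j := by
        simp only [signVec, PiLp.toLp_apply, Function.update_self]; cases s j <;> norm_num
      have h2 : signVec d (Function.update s j (!s j)) k = signVec d s k := by
        simp only [signVec, PiLp.toLp_apply, Function.update_of_ne (Ne.symm hjk)]
      simp only [hF, h1, h2]; ring
    have hsum : ∑ s, F s = -∑ s, F s := by
      calc ∑ s, F s = ∑ s, F (hinv.toPerm _ s) := (Equiv.sum_comp (hinv.toPerm _) F).symm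
        _ = ∑ s, -(F s) := by
            apply Finset.sum_congr rfl
            intro s _
            simp only [Function.Involutive.coe_toPerm]
            exact hneg s
        _ = -∑ s, F s := by rw [Finset.sum_neg_distrib]
    linarith

lemma signVec_avg (d : ℕ) (g : EuclideanSpace ℝ (Fin d)) :
    ∑ s : Fin d → Bool, (∑ j, g j * signVec d s j) • signVec d s = (2^d : ℝ) • g := by
  ext k
  rw [WithLp.ofLp_sum, Finset.sum_apply]
  simp only [PiLp.smul_apply, smul_eq_mul]
  have step : ∀ s : Fin d → Bool, (∑ j, g j * signVec d s j) * signVec d s k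
      = ∑ j, g j * (signVec d s j * signVec d s k) := by
    intro s; rw [Finset.sum_mul]; exact Finset.sum_congr rfl fun j _ => by ring
  rw [Finset.sum_congr rfl fun s _ => step s, Finset.sum_comm]
  simp_rw [← Finset.mul_sum, signVec_mul_sum]
  simp [mul_comm]

lemma signVec_norm (d : ℕ) (s : Fin d → Bool) : ‖signVec d s‖ = Real.sqrt d := by
  rw [EuclideanSpace.norm_eq]
  congr 1
  rw [Finset.sum_congr rfl (fun i _ => (by simp only [signVec, PiLp.toLp_apply]; cases s i <;> norm_num :
    ‖signVec d s i‖ ^ 2 = 1))]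
  simp

lemma taylor_bound_aux (d : ℕ) (f : EuclideanSpace ℝ (Fin d) → ℝ)
    (x : EuclideanSpace ℝ (Fin d)) (U : Set (EuclideanSpace ℝ (Fin d)))
    (hU : IsOpen U) (hxU : x ∈ U) (hf : ContDiffOn ℝ 3 f U) (Δ : EuclideanSpace ℝ (Fin d)) :
    ∃ r > (0:ℝ), ∃ C ≥ (0:ℝ), ∀ h : ℝ, 0 < h → h ≤ r →
      |(f (x + h • Δ) - f (x - h • Δ)) / (2 * h) - fderiv ℝ f x Δ| ≤ C * h ^ 2 := by
  obtain ⟨ε, hε, hball⟩ := Metric.isOpen_iff.1 hU x hxU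
  set r' : ℝ := ε / (‖Δ‖ + 1) with hr'def
  have hr' : 0 < r' := div_pos hε (by positivity)
  have hmem : ∀ t : ℝ, |t| < r' → x + t • Δ ∈ U ∧ x - t • Δ ∈ U := by
    intro t ht
    have hn : ‖t • Δ‖ < ε := by
      rw [norm_smul, Real.norm_eq_abs]
      have h2 := (lt_div_iff₀ (by positivity : (0:ℝ) < ‖Δ‖ + 1)).1 ht
      nlinarith [abs_nonneg t, norm_nonneg Δ]
    constructor
    · apply hball
      rw [Metric.mem_ball, dist_eq_norm]
      have : x + t • Δ - x = t • Δ := by abel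
      rw [this]; exact hn
    · apply hball
      rw [Metric.mem_ball, dist_eq_norm]
      have : x - t • Δ - x = -(t • Δ) := by abel
      rw [this, norm_neg]; exact hn
  set φ : ℝ → ℝ := fun t => f (x + t • Δ) - f (x - t • Δ) with hφdef
  set V : Set ℝ := Set.Ioo (-r') r' with hVdef
  have hV : IsOpen V := isOpen_Ioo
  have h0V : (0:ℝ) ∈ V := ⟨neg_neg_iff_pos.2 hr', hr'⟩
  have habs : ∀ t ∈ V, |t| < r' := fun t ht => abs_lt.2 ⟨ht.1, ht.2⟩
  have hc1 : ContDiff ℝ 3 (fun t : ℝ => x + t • Δ) :=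
    contDiff_const.add (contDiff_id.smul contDiff_const)
  have hc2 : ContDiff ℝ 3 (fun t : ℝ => x - t • Δ) :=
    contDiff_const.sub (contDiff_id.smul contDiff_const)
  have hφt : ∀ t ∈ V, ContDiffAt ℝ 3 φ t := by
    intro t ht
    have hmt := hmem t (habs t ht)
    have h1 : ContDiffAt ℝ 3 (fun t : ℝ => f (x + t • Δ)) t :=
      (hf.contDiffAt (hU.mem_nhds hmt.1)).comp t hc1.contDiffAt
    have h2 : ContDiffAt ℝ 3 (fun t : ℝ => f (x - t • Δ)) t :=
      (hf.contDiffAt (hU.mem_nhds hmt.2)).comp t hc2.contDiffAt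
    exact h1.sub h2
  have hφ : ContDiffOn ℝ 3 φ V := fun t ht => (hφt t ht).contDiffWithinAt
  -- derivative of φ at 0
  have hfd : HasFDerivAt f (fderiv ℝ f x) x :=
    ((hf.contDiffAt (hU.mem_nhds hxU)).differentiableAt (by norm_num)).hasFDerivAt
  have hcp0 : HasDerivAt (fun t : ℝ => x + t • Δ) Δ 0 := by
    simpa using ((hasDerivAt_id (0:ℝ)).smul_const Δ).const_add x
  have hcm0 : HasDerivAt (fun t : ℝ => x - t • Δ) (-Δ) 0 := by
    simpa using ((hasDerivAt_id (0:ℝ)).smul_const Δ).const_sub x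
  have h0p : x + (0:ℝ) • Δ = x := by simp
  have h0m : x - (0:ℝ) • Δ = x := by simp
  have h1 : HasDerivAt (fun t : ℝ => f (x + t • Δ)) (fderiv ℝ f x Δ) 0 := by
    have hfd' : HasFDerivAt f (fderiv ℝ f x) (x + (0:ℝ) • Δ) := by rwa [h0p]
    exact hfd'.comp_hasDerivAt 0 hcp0
  have h2 : HasDerivAt (fun t : ℝ => f (x - t • Δ)) (fderiv ℝ f x (-Δ)) 0 := by
    have hfd' : HasFDerivAt f (fderiv ℝ f x) (x - (0:ℝ) • Δ) := by rwa [h0m]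
    exact hfd'.comp_hasDerivAt 0 hcm0
  have hφ0 : HasDerivAt φ (2 * fderiv ℝ f x Δ) 0 := by
    have := h1.sub h2
    rw [map_neg, sub_neg_eq_add, ← two_mul] at this
    exact this
  -- oddness and second derivative at 0
  have hodd : ∀ t, φ (-t) = -φ t := by
    intro t
    simp only [hφdef, neg_smul, ← sub_eq_add_neg, sub_neg_eq_add]
    ring
  have hφneg : φ = fun u => -φ (-u) := by
    funext u; rw [hodd]; ring
  have hevenderiv : ∀ t, deriv φ t = deriv φ (-t) := by
    intro t
    calc deriv φ t = deriv (fun u => -φ (-u)) t := by rw [← hφneg]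
      _ = -(deriv (fun u => φ (-u)) t) := deriv.neg
      _ = -(-(deriv φ (-t))) := by rw [deriv_comp_neg]
      _ = deriv φ (-t) := neg_neg _
  have hd2 : deriv (deriv φ) 0 = 0 := by
    have heq : deriv φ = fun t => deriv φ (-t) := funext fun t => hevenderiv t
    have h2 : deriv (fun t => deriv φ (-t)) 0 = -deriv (deriv φ) (-0) := deriv_comp_neg (deriv φ) 0
    rw [← heq, neg_zero] at h2
    linarith
  -- Taylor
  set r : ℝ := r' / 2 with hrdef
  have hr : 0 < r := by positivity
  have hsub : Set.Icc (0:ℝ) r ⊆ V := by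
    intro t ht
    exact ⟨lt_of_lt_of_le (neg_neg_iff_pos.2 hr') ht.1, lt_of_le_of_lt ht.2 (by linarith)⟩
  have hφIcc : ContDiffOn ℝ ((2:ℕ) + 1 : ℕ) φ (Set.Icc 0 r) := by
    have := hφ.mono hsub
    exact_mod_cast this
  obtain ⟨C₀, hC₀⟩ := exists_taylor_mean_remainder_bound (le_of_lt hr) hφIcc
  have unique : UniqueDiffOn ℝ (Set.Icc (0:ℝ) r) := uniqueDiffOn_Icc hr
  have mem0 : (0:ℝ) ∈ Set.Icc (0:ℝ) r := Set.left_mem_Icc.2 hr.le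
  have hdiffAt : ∀ t ∈ V, DifferentiableAt ℝ φ t := fun t ht =>
    (hφt t ht).differentiableAt (by norm_num)
  have h1w : iteratedDerivWithin 1 φ (Set.Icc 0 r) 0 = 2 * fderiv ℝ f x Δ := by
    rw [iteratedDerivWithin_one,
      (hdiffAt 0 h0V).derivWithin (unique 0 mem0)]
    exact hφ0.deriv
  have hderivφ : ContDiffOn ℝ 2 (deriv φ) V := hφ.deriv_of_isOpen hV (by norm_num)
  have hd2diff : DifferentiableAt ℝ (deriv φ) 0 :=
    (hderivφ.contDiffAt (hV.mem_nhds h0V)).differentiableAt (by norm_num)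
  have h2w : iteratedDerivWithin 2 φ (Set.Icc 0 r) 0 = 0 := by
    rw [show (2:ℕ) = 1 + 1 from rfl, iteratedDerivWithin_succ]
    have hcongr : derivWithin (iteratedDerivWithin 1 φ (Set.Icc 0 r)) (Set.Icc 0 r) 0
        = derivWithin (deriv φ) (Set.Icc 0 r) 0 := by
      apply derivWithin_congr
      · intro y hy
        rw [iteratedDerivWithin_one,
          (hdiffAt y (hsub hy)).derivWithin (unique y hy)]
      · rw [iteratedDerivWithin_one,
          (hdiffAt 0 h0V).derivWithin (unique 0 mem0)]
    rw [hcongr, hd2diff.derivWithin (unique 0 mem0), hd2]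
  have hφzero : φ 0 = 0 := by simp [hφdef]
  have hT : ∀ h : ℝ, taylorWithinEval φ 2 (Set.Icc 0 r) 0 h = h * (2 * fderiv ℝ f x Δ) := by
    intro h
    rw [show (2:ℕ) = 1 + 1 from rfl, taylorWithinEval_succ, taylorWithinEval_succ,
      taylor_within_zero_eval, h1w]
    rw [show (1:ℕ) + 1 = 2 from rfl, h2w]
    simp only [smul_eq_mul, Nat.factorial_one, Nat.factorial_zero, Nat.cast_one,
      Nat.cast_ofNat, sub_zero, pow_one, mul_zero, add_zero, hφzero]
    ring
  have hC₀pos : 0 ≤ C₀ := by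
    have hb := hC₀ r (Set.right_mem_Icc.2 hr.le)
    rw [sub_zero] at hb
    have := norm_nonneg (φ r - taylorWithinEval φ 2 (Set.Icc 0 r) 0 r)
    nlinarith [pow_pos hr (2 + 1)]
  refine ⟨r, hr, C₀, hC₀pos, ?_⟩
  intro h hpos hle
  have hh : h ∈ Set.Icc (0:ℝ) r := ⟨hpos.le, hle⟩
  have hb := hC₀ h hh
  rw [hT h, Real.norm_eq_abs, sub_zero] at hb
  have key : (f (x + h • Δ) - f (x - h • Δ)) / (2 * h) - fderiv ℝ f x Δ
      = (φ h - h * (2 * fderiv ℝ f x Δ)) / (2 * h) := by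
    simp only [hφdef]
    field_simp
  rw [key, abs_div, abs_of_pos (by positivity : (0:ℝ) < 2 * h), div_le_iff₀ (by positivity)]
  have hcube : C₀ * h ^ (2 + 1) ≤ C₀ * h ^ 2 * (2 * h) := by rw [pow_succ]; nlinarith [mul_nonneg hC₀pos (mul_nonneg (sq_nonneg h) hpos.le)]
  linarith

/-- Vector-valued `O(h²)` bias bound of Theorem 1: if `f` is three times continuously
differentiable on an open set containing `x`, and `A h` denotes the average over all sign
vectors `Δ ∈ {-1,1}^d` of `((f(x + hΔ) - f(x - hΔ))/(2h)) • Δ`, then there are `C > 0` and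
`h₀ > 0` such that `‖A h - ∇f(x)‖ ≤ C h²` for all `0 < h < h₀`. -/
theorem simultaneous_perturbation_bias_vector (d : ℕ) (f : EuclideanSpace ℝ (Fin d) → ℝ)
    (x : EuclideanSpace ℝ (Fin d)) (U : Set (EuclideanSpace ℝ (Fin d)))
    (hU : IsOpen U) (hxU : x ∈ U) (hf : ContDiffOn ℝ 3 f U)
    (A : ℝ → EuclideanSpace ℝ (Fin d))
    (hA : ∀ h : ℝ, A h = (2 ^ d : ℝ)⁻¹ • ∑ s : Fin d → Bool,
        ((f (x + h • signVec d s) - f (x - h • signVec d s)) / (2 * h)) • signVec d s) :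
    ∃ C > (0 : ℝ), ∃ h₀ > (0 : ℝ), ∀ h : ℝ, 0 < h → h < h₀ →
      ‖A h - gradient f x‖ ≤ C * h ^ 2 := by
  choose r hr C hC hb using fun s : Fin d → Bool =>
    taylor_bound_aux d f x U hU hxU hf (signVec d s)
  have hne : (Finset.univ : Finset (Fin d → Bool)).Nonempty := Finset.univ_nonempty
  set h₀ : ℝ := Finset.univ.inf' hne r with hh₀def
  have hh₀ : 0 < h₀ := (Finset.lt_inf'_iff hne).2 fun s _ => hr s
  set Ct : ℝ := (2 ^ d : ℝ)⁻¹ * Real.sqrt d * (∑ s : Fin d → Bool, C s) + 1 with hCtdef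
  have hsumC : 0 ≤ ∑ s : Fin d → Bool, C s := Finset.sum_nonneg fun s _ => hC s
  have hCt : 0 < Ct := by positivity
  refine ⟨Ct, hCt, h₀, hh₀, ?_⟩
  intro h hpos hlt
  -- inner product identity
  have hip : ∀ s : Fin d → Bool,
      (∑ j, gradient f x j * signVec d s j) = fderiv ℝ f x (signVec d s) := by
    intro s
    have h1 : (inner ℝ (gradient f x) (signVec d s) : ℝ) = fderiv ℝ f x (signVec d s) :=
      InnerProductSpace.toDual_symm_apply
    rw [← h1, PiLp.inner_apply]
    simp [RCLike.inner_apply, conj_trivial, mul_comm]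
  have hgrad : gradient f x
      = (2 ^ d : ℝ)⁻¹ • ∑ s : Fin d → Bool, (fderiv ℝ f x (signVec d s)) • signVec d s := by
    have havg := signVec_avg d (gradient f x)
    rw [Finset.sum_congr rfl (fun s _ => by rw [hip s])] at havg
    rw [havg, smul_smul, inv_mul_cancel₀ (by positivity), one_smul]
  have hdiff : A h - gradient f x = (2 ^ d : ℝ)⁻¹ • ∑ s : Fin d → Bool,
      ((f (x + h • signVec d s) - f (x - h • signVec d s)) / (2 * h)
        - fderiv ℝ f x (signVec d s)) • signVec d s := by
    rw [hA h, hgrad, ← smul_sub, ← Finset.sum_sub_distrib]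
    congr 1
    exact Finset.sum_congr rfl fun s _ => (sub_smul _ _ _).symm
  have hhr : ∀ s : Fin d → Bool, h ≤ r s := fun s =>
    le_of_lt (lt_of_lt_of_le hlt (Finset.inf'_le r (Finset.mem_univ s)))
  rw [hdiff, norm_smul]
  have hnorminv : ‖(2 ^ d : ℝ)⁻¹‖ = (2 ^ d : ℝ)⁻¹ := by
    rw [Real.norm_eq_abs, abs_of_pos (by positivity)]
  rw [hnorminv]
  calc (2 ^ d : ℝ)⁻¹ * ‖∑ s : Fin d → Bool,
      ((f (x + h • signVec d s) - f (x - h • signVec d s)) / (2 * h)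
        - fderiv ℝ f x (signVec d s)) • signVec d s‖
      ≤ (2 ^ d : ℝ)⁻¹ * ∑ s : Fin d → Bool, (C s * h ^ 2) * Real.sqrt d := by
        apply mul_le_mul_of_nonneg_left _ (by positivity)
        refine le_trans (norm_sum_le _ _) (Finset.sum_le_sum fun s _ => ?_)
        rw [norm_smul, Real.norm_eq_abs, signVec_norm]
        exact mul_le_mul_of_nonneg_right (hb s h hpos (hhr s)) (Real.sqrt_nonneg _)
    _ ≤ Ct * h ^ 2 := by
        rw [← Finset.sum_mul, ← Finset.sum_mul]
        rw [hCtdef]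
        nlinarith [Real.sqrt_nonneg (d:ℝ), pow_pos hpos 2,
          inv_pos.2 (pow_pos (by norm_num : (0:ℝ) < 2) d), hsumC,
          mul_nonneg (mul_nonneg (inv_pos.2 (pow_pos (by norm_num : (0:ℝ) < 2) d)).le
            (Real.sqrt_nonneg (d:ℝ))) hsumC]
end

section
/- Let f : ℝ^d → ℝ be three times continuously differentiable on an open set containing the point x. Then there exist constants C > 0 and h₀ > 0 such that for every 0 < h < h₀ and every coordinate i ∈ {1,…,d}, the variance over Δ uniformly distributed on {−1,1}^d of the random variable (f(x+hΔ) − f(x−hΔ))/(2h Δ_i) is at most C. -/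
open Finset MeasureTheory ProbabilityTheory

/-- The uniform probability measure on the set of sign vectors `{-1,1}^d` (identified with
`Fin d → Bool`): each of the `2^d` sign vectors has probability `2⁻ᵈ`. -/
noncomputable def uniformSigns (d : ℕ) : Measure (Fin d → Bool) :=
  (PMF.uniformOfFintype (Fin d → Bool)).toMeasure

/-- Uniform boundedness (in `h` and `i`) of the perturbation-induced variance of the
simultaneous-perturbation difference quotient, from the proof of Theorem 1: if `f` is three
times continuously differentiable on an open set containing `x`, then there are `C > 0` and
`h₀ > 0` such that for all `0 < h < h₀` and every coordinate `i`, the variance over `Δ`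
uniform on `{-1,1}^d` of `(f(x+hΔ) - f(x-hΔ))/(2hΔᵢ)` is at most `C`. -/
theorem variance_difference_quotient_bounded (d : ℕ) (f : EuclideanSpace ℝ (Fin d) → ℝ)
    (x : EuclideanSpace ℝ (Fin d)) (U : Set (EuclideanSpace ℝ (Fin d)))
    (hU : IsOpen U) (hxU : x ∈ U) (hf : ContDiffOn ℝ 3 f U) :
    ∃ C > (0 : ℝ), ∃ h₀ > (0 : ℝ), ∀ h : ℝ, 0 < h → h < h₀ → ∀ i : Fin d,
      variance (fun s : Fin d → Bool =>
          (f (x + h • signVec d s) - f (x - h • signVec d s)) / (2 * h * signVec d s i))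
        (uniformSigns d) ≤ C := by
  have hcd : ContDiffAt ℝ 1 f x :=
    (hf.contDiffAt (hU.mem_nhds hxU)).of_le (by norm_num)
  obtain ⟨K, t, htx, hK⟩ := hcd.exists_lipschitzOnWith
  obtain ⟨ε, hε, hball⟩ := Metric.mem_nhds_iff.mp htx
  have hsqd : (0:ℝ) ≤ Real.sqrt d := Real.sqrt_nonneg _
  have hnorm : ∀ s : Fin d → Bool, ‖signVec d s‖ = Real.sqrt d := by
    intro s
    rw [EuclideanSpace.norm_eq]
    congr 1
    have h1 : ∀ k, signVec d s k ^ 2 = 1 := by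
      intro k
      simp only [signVec]
      by_cases hs : s k <;> simp [hs]
    simp [h1]
  refine ⟨(K * Real.sqrt d) ^ 2 + 1, by positivity, ε / (Real.sqrt d + 1),
    by positivity, fun h hh hhε i => ?_⟩
  haveI : IsProbabilityMeasure (uniformSigns d) := PMF.toMeasure.isProbabilityMeasure _
  set X : (Fin d → Bool) → ℝ := fun s =>
    (f (x + h • signVec d s) - f (x - h • signVec d s)) / (2 * h * signVec d s i) with hX
  have hmem : ∀ s : Fin d → Bool, x + h • signVec d s ∈ t ∧ x - h • signVec d s ∈ t := by
    intro s
    have hlt : h * Real.sqrt d < ε := by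
      calc h * Real.sqrt d ≤ h * (Real.sqrt d + 1) := by nlinarith
        _ < ε := by
          rw [← lt_div_iff₀ (by positivity)]
          exact hhε
    constructor <;> apply hball <;>
      simp only [Metric.mem_ball, dist_eq_norm, add_sub_cancel_left, sub_sub_cancel_left,
        norm_neg, norm_smul, Real.norm_eq_abs, abs_of_pos hh, hnorm] <;> exact hlt
  have hbound : ∀ s : Fin d → Bool, |X s| ≤ K * Real.sqrt d := by
    intro s
    have h1 : |f (x + h • signVec d s) - f (x - h • signVec d s)| ≤ K * (2 * h * Real.sqrt d) := by
      have := hK.dist_le_mul _ (hmem s).1 _ (hmem s).2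
      rw [Real.dist_eq] at this
      refine this.trans ?_
      have hd : dist (x + h • signVec d s) (x - h • signVec d s) = 2 * h * Real.sqrt d := by
        rw [dist_eq_norm]
        have : (x + h • signVec d s) - (x - h • signVec d s) = (2 * h) • signVec d s := by
          module
        rw [this, norm_smul, Real.norm_eq_abs, abs_of_pos (by positivity), hnorm]
      rw [hd]
    have h2 : |2 * h * signVec d s i| = 2 * h := by
      simp only [abs_mul, signVec]
      by_cases hs : s i <;> simp [hs, abs_of_pos hh]
    rw [hX, abs_div, h2, div_le_iff₀ (by positivity)]
    calc |f (x + h • signVec d s) - f (x - h • signVec d s)| ≤ K * (2 * h * Real.sqrt d) := h1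
      _ = K * Real.sqrt d * (2 * h) := by ring
  calc variance X (uniformSigns d) ≤ ∫ s, (X ^ 2) s ∂(uniformSigns d) :=
        variance_le_expectation_sq (Integrable.of_finite).aestronglyMeasurable
    _ ≤ ∫ _s, (K * Real.sqrt d) ^ 2 ∂(uniformSigns d) := by
        apply integral_mono Integrable.of_finite (integrable_const _)
        intro s
        have := hbound s
        simp only [Pi.pow_apply]
        nlinarith [abs_nonneg (X s), sq_abs (X s)]
    _ = (K * Real.sqrt d) ^ 2 := by simp
    _ ≤ (K * Real.sqrt d) ^ 2 + 1 := by linarith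
end
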